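/- Let c > 0, β ≥ 0 and ε > 0, and set γ := (ε/(2c))^{1/(1+β)}; assume γ ∈ (0, 1/2). Suppose D_X satisfies the Tsybakov noise condition, i.e., P_{x∼D_X}(|η(x) − 1/2| ≤ τ) ≤ c·τ^β for every τ > 0, and suppose the measurable classifier ĥ : X → {+1, −1, ⊥} enjoys proper abstention with parameter γ, i.e., {x : ĥ(x) = ⊥} ⊆ {x : |η(x) − 1/2| ≤ γ}. Then the randomized version č satisfies err(č) − err(h⋆) ≤ (err_γ(ĥ) − err(h⋆)) + ε/2. -/

import Mathlib

open MeasureTheory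

/-- **Tsybakov-noise conversion.** Let `c > 0`, `β ≥ 0`, `ε > 0` and set
`γ := (ε / (2c)) ^ (1 / (1 + β))`; assume `γ ∈ (0, 1/2)`.  Suppose `D_X` satisfies the
Tsybakov noise condition `P(|η - 1/2| ≤ τ) ≤ c·τ^β` for all `τ > 0`, and the measurable
classifier `h : X → {+1, -1, ⊥}` (encoded as `Option Bool`) enjoys proper abstention with
parameter `γ`.  Then the randomized version `č` satisfies
`err(č) - err(h⋆) ≤ (err_γ(h) - err(h⋆)) + ε / 2`. -/
theorem stmt_5 {X : Type*} [MeasurableSpace X] (μ : Measure X) [IsProbabilityMeasure μ]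
    (η : X → ℝ) (hη : Measurable η) (hη01 : ∀ x, η x ∈ Set.Icc (0 : ℝ) 1)
    (h : X → Option Bool)
    (hnone : MeasurableSet {x | h x = none})
    (htrue : MeasurableSet {x | h x = some true})
    (c β ε : ℝ) (hc : 0 < c) (hβ : 0 ≤ β) (hε : 0 < ε)
    (γ : ℝ) (hγdef : γ = (ε / (2 * c)) ^ ((1 : ℝ) / (1 + β)))
    (hγ0 : 0 < γ) (hγ : γ < 1 / 2)
    (htsybakov : ∀ τ : ℝ, 0 < τ → (μ {x | |η x - 1 / 2| ≤ τ}).toReal ≤ c * τ ^ β)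
    (hproper : {x | h x = none} ⊆ {x | |η x - 1 / 2| ≤ γ}) :
    (∫ x, (h x).elim (1 / 2 : ℝ) (fun b => if b then 1 - η x else η x) ∂μ)
        - (∫ x, min (η x) (1 - η x) ∂μ)
      ≤ ((∫ x, (h x).elim (1 / 2 - γ) (fun b => if b then 1 - η x else η x) ∂μ)
            - (∫ x, min (η x) (1 - η x) ∂μ))
        + ε / 2 := by
  classical
  set S : Set X := {x | h x = none} with hSdef
  set T : Set X := {x | h x = some true} with hTdef
  set F : Set X := (S ∪ T)ᶜ with hFdef
  have hF : MeasurableSet F := (hnone.union htrue).compl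
  -- decomposition of g
  set G : X → ℝ := fun x =>
    S.indicator (fun _ => (1 / 2 - γ : ℝ)) x + T.indicator (fun x => 1 - η x) x
      + F.indicator η x with hGdef
  have hGeq : (fun x => (h x).elim (1 / 2 - γ : ℝ)
      (fun b => if b then 1 - η x else η x)) = G := by
    funext x
    rcases hx : h x with _ | b
    · have hxS : x ∈ S := hx
      have hxT : x ∉ T := by simp [hTdef, hx]
      have hxF : x ∉ F := by simp [hFdef, hxS]
      simp [hGdef, hx, Set.indicator_of_mem hxS, Set.indicator_of_notMem hxT,
        Set.indicator_of_notMem hxF]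
    · cases b
      · have hxS : x ∉ S := by simp [hSdef, hx]
        have hxT : x ∉ T := by simp [hTdef, hx]
        have hxF : x ∈ F := by simp [hFdef, hxS, hxT, hSdef, hTdef, hx]
        simp [hGdef, hx, Set.indicator_of_notMem hxS, Set.indicator_of_notMem hxT,
          Set.indicator_of_mem hxF]
      · have hxS : x ∉ S := by simp [hSdef, hx]
        have hxT : x ∈ T := hx
        have hxF : x ∉ F := by simp [hFdef, hxT]
        simp [hGdef, hx, Set.indicator_of_notMem hxS, Set.indicator_of_mem hxT,
          Set.indicator_of_notMem hxF]
  have hηint : Integrable η μ := by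
    refine (integrable_const (1 : ℝ)).mono' hη.aestronglyMeasurable (ae_of_all _ ?_)
    intro x
    have := hη01 x
    rw [Real.norm_eq_abs, abs_le]
    constructor <;> [linarith [this.1]; linarith [this.2]]
  have h1ηint : Integrable (fun x => 1 - η x) μ := (integrable_const (1 : ℝ)).sub hηint
  have hGint : Integrable G μ := by
    refine (((integrable_const _).indicator hnone).add (h1ηint.indicator htrue)).add
      (hηint.indicator hF)
  -- pointwise: f = G + indicator of S times γ
  have hfeq : (fun x => (h x).elim (1 / 2 : ℝ) (fun b => if b then 1 - η x else η x))
      = fun x => G x + S.indicator (fun _ => γ) x := by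
    funext x
    rcases hx : h x with _ | b
    · have hxS : x ∈ S := hx
      have hxT : x ∉ T := by simp [hTdef, hx]
      have hxF : x ∉ F := by simp [hFdef, hxS]
      simp [hGdef, hx, Set.indicator_of_mem hxS, Set.indicator_of_notMem hxT,
        Set.indicator_of_notMem hxF]
    · cases b
      · have hxS : x ∉ S := by simp [hSdef, hx]
        have hxT : x ∉ T := by simp [hTdef, hx]
        have hxF : x ∈ F := by simp [hFdef, hxS, hxT, hSdef, hTdef, hx]
        simp [hGdef, hx, Set.indicator_of_notMem hxS, Set.indicator_of_notMem hxT,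
          Set.indicator_of_mem hxF]
      · have hxS : x ∉ S := by simp [hSdef, hx]
        have hxT : x ∈ T := hx
        have hxF : x ∉ F := by simp [hFdef, hxT]
        simp [hGdef, hx, Set.indicator_of_notMem hxS, Set.indicator_of_mem hxT,
          Set.indicator_of_notMem hxF]
  have hIndInt : Integrable (S.indicator (fun _ => γ)) μ := (integrable_const γ).indicator hnone
  have hsplit : (∫ x, (h x).elim (1 / 2 : ℝ) (fun b => if b then 1 - η x else η x) ∂μ)
      = (∫ x, (h x).elim (1 / 2 - γ : ℝ) (fun b => if b then 1 - η x else η x) ∂μ)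
        + (μ S).toReal * γ := by
    rw [hfeq, hGeq, integral_add hGint hIndInt, integral_indicator_const _ hnone, smul_eq_mul, measureReal_def]
  -- bound γ * μ S ≤ ε/2
  have hμS : (μ S).toReal * γ ≤ ε / 2 := by
    have h1 : (μ S).toReal ≤ (μ {x | |η x - 1 / 2| ≤ γ}).toReal :=
      ENNReal.toReal_mono (measure_ne_top μ _) (measure_mono hproper)
    have h2 := htsybakov γ hγ0
    have hb : (1 : ℝ) + β ≠ 0 := by linarith
    have hεc : (0 : ℝ) ≤ ε / (2 * c) := by positivity
    have h3 : γ * (c * γ ^ β) = ε / 2 := by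
      have hpow : γ * γ ^ β = γ ^ ((1 : ℝ) + β) := by
        rw [Real.rpow_add hγ0, Real.rpow_one]
      have h4 : γ ^ ((1 : ℝ) + β) = ε / (2 * c) := by
        rw [hγdef, ← Real.rpow_mul hεc,
          one_div_mul_cancel hb, Real.rpow_one]
      calc γ * (c * γ ^ β) = c * (γ * γ ^ β) := by ring
        _ = c * (ε / (2 * c)) := by rw [hpow, h4]
        _ = ε / 2 := by field_simp
    have hγpos : 0 ≤ γ ^ β := Real.rpow_nonneg hγ0.le β
    nlinarith [ENNReal.toReal_nonneg (a := μ S)]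
  linarith [hsplit, hμS]
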